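/- Sample a forest uniformly from the set of plane forests with ranked roots having ECD s̃ (with z̃ roots, m̃ vertices, maximum children count Δ̃), and let X_j denote the number of children of the root of the j-th tree. Then for distinct indices j₁ ≠ j₂ and values i₁ ≠ i₂, P(X_{j₁} = i₁, X_{j₂} = i₂) = (z̃ − 2 + i₁ + i₂)·s̃_{i₁}·s̃_{i₂} / (z̃·(m̃−1)·(m̃−2)). -/

import Mathlib

open scoped BigOperators Classical
open Filter MeasureTheory

namespace Paper

inductive PlaneTree : Type
  | node : List PlaneTree → PlaneTree

namespace PlaneTree

def deg : PlaneTree → ℕ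
  | node ts => ts.length

mutual
  def pos : PlaneTree → List (List ℕ)
    | node ts => [] :: posF 0 ts
  def posF : ℕ → List PlaneTree → List (List ℕ)
    | _, [] => []
    | i, t :: ts => (pos t).map (fun q => i :: q) ++ posF (i + 1) ts
end

mutual
  def dfsDeg : PlaneTree → List ℕ
    | node ts => ts.length :: dfsDegF ts
  def dfsDegF : List PlaneTree → List ℕ
    | [] => []
    | t :: ts => dfsDeg t ++ dfsDegF ts
end

def subtreeAt : PlaneTree → List ℕ → Option PlaneTree
  | t, [] => some t
  | node ts, i :: p =>
    match ts[i]? with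
    | some t' => subtreeAt t' p
    | none => none

def numChild (t : PlaneTree) (p : List ℕ) : ℕ := ((subtreeAt t p).map deg).getD 0

def IsVertex (t : PlaneTree) (p : List ℕ) : Prop := (subtreeAt t p).isSome

def IsLeaf (t : PlaneTree) (p : List ℕ) : Prop := (subtreeAt t p).isSome ∧ numChild t p = 0

/-- number of vertices of `t` having exactly `i` children (empirical children distribution) -/
def ecd (t : PlaneTree) (i : ℕ) : ℕ :=
  ((pos t).filter fun p => decide (numChild t p = i)).length

/-- ECD of a plane forest with ranked roots -/
def ecdF (f : List PlaneTree) (i : ℕ) : ℕ := (f.map fun t => ecd t i).sum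

/-- number of children of the `j`-th root of a forest -/
def rootDeg (f : List PlaneTree) (j : ℕ) : ℕ := deg (f.getD j (node []))

/-- the set of plane forests with ranked roots with ECD `s` -/
def forestSet (s : ℕ → ℕ) : Set (List PlaneTree) := {f | ∀ i, ecdF f i = s i}

/-- the set of plane trees with ECD `s` -/
def treeSet (s : ℕ → ℕ) : Set PlaneTree := {t | ∀ i, ecd t i = s i}

/-- strict depth-first (preorder) order on positions -/
def dfLT (p q : List ℕ) : Prop := List.Lex (· < ·) p q

def parent (p : List ℕ) : List ℕ := p.dropLast

/-- `q` is a strict ancestor of `p`, i.e. `q ∈ [ρ, p)` -/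
def StrictAnc (q p : List ℕ) : Prop := q <+: p ∧ q ≠ p

/-- admissible (ordered) pair of leaves -/
def Admissible (t : PlaneTree) (u v : List ℕ) : Prop :=
  IsLeaf t u ∧ IsLeaf t v ∧ 2 ≤ v.length ∧
    StrictAnc (parent (parent v)) (parent u) ∧ dfLT (parent u) (parent v)

def ASet (t : PlaneTree) : Set (List ℕ × List ℕ) := {uv | Admissible t uv.1 uv.2}

def fA (t : PlaneTree) (u : List ℕ) : Set (List ℕ) := {v | Admissible t u v}

def B2 (t : PlaneTree) (u : List ℕ) : Set (List ℕ) :=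
  {v | IsVertex t v ∧ 2 ≤ v.length ∧ StrictAnc (parent (parent v)) u}

noncomputable def leafFinset (t : PlaneTree) : Finset (List ℕ) :=
  ((pos t).toFinset).filter fun p => IsLeaf t p

def leafOf {k : ℕ} (w : Fin k → List ℕ × List ℕ) (y : Fin k × Bool) : List ℕ :=
  if y.2 then (w y.1).1 else (w y.1).2

/-- ordered `k`-tuples of admissible pairs using `2k` distinct leaves -/
def AkOrd (t : PlaneTree) (k : ℕ) : Set (Fin k → List ℕ × List ℕ) :=
  {w | (∀ a, Admissible t (w a).1 (w a).2) ∧ Function.Injective (leafOf w)}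

/-- unordered collections of `k` admissible pairs using `2k` distinct leaves -/
def Ak (t : PlaneTree) (k : ℕ) : Set (Finset (List ℕ × List ℕ)) :=
  {x | x.card = k ∧ (∀ uv ∈ x, Admissible t uv.1 uv.2) ∧
    Set.InjOn (fun y : (List ℕ × List ℕ) × Bool => if y.2 then y.1.1 else y.1.2)
      {y | y.1 ∈ x}}

/-- the set `T_s^(k)` of pairs of a plane tree with ECD `s` and a set of `k` admissible pairs -/
def Tsk (s : ℕ → ℕ) (k : ℕ) : Set (PlaneTree × Finset (List ℕ × List ℕ)) :=
  {tx | (∀ i, ecd tx.1 i = s i) ∧ tx.2 ∈ Ak tx.1 k}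

end PlaneTree

/-- labeled plane trees -/
inductive LTree : Type
  | node : ℕ → List LTree → LTree

namespace LTree

mutual
  def shape : LTree → PlaneTree
    | node _ ts => .node (shapeF ts)
  def shapeF : List LTree → List PlaneTree
    | [] => []
    | t :: ts => shape t :: shapeF ts
end

mutual
  def dfsLab : LTree → List ℕ
    | node a ts => a :: dfsLabF ts
  def dfsLabF : List LTree → List ℕ
    | [] => []
    | t :: ts => dfsLab t ++ dfsLabF ts
end

mutual
  def dfsDeg : LTree → List ℕ
    | node _ ts => ts.length :: dfsDegF ts
  def dfsDegF : List LTree → List ℕ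
    | [] => []
    | t :: ts => dfsDeg t ++ dfsDegF ts
end

def subtreeAt : LTree → List ℕ → Option LTree
  | t, [] => some t
  | node _ ts, i :: p =>
    match ts[i]? with
    | some t' => subtreeAt t' p
    | none => none

def labelAt (t : LTree) (p : List ℕ) : ℕ :=
  ((subtreeAt t p).map fun u => match u with | node a _ => a).getD 0

end LTree

/-- partial-sum steps of the permuted walk -/
def steps {m : ℕ} (c : Fin m → ℕ) (π : Equiv.Perm (Fin m)) : List ℤ :=
  List.ofFn fun i => (c (π i) : ℤ) - 1

/-- first index `j ∈ [1, length]` at which the partial sums attain their minimum -/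
noncomputable def firstMinIdx (l : List ℤ) : ℕ :=
  (((Finset.Icc 1 l.length).filter fun j =>
      ∀ j' ∈ Finset.Icc 1 l.length, (l.take j).sum ≤ (l.take j').sum).min).untopD 0

/-- the DFS vertex sequence obtained by rotating the uniformly permuted vertex
sequence at the first minimum of its Łukasiewicz-type walk (Vervaat transform) -/
noncomputable def rotSeq {m : ℕ} (c : Fin m → ℕ) (π : Equiv.Perm (Fin m)) : List (Fin m) :=
  (List.ofFn fun i => π i).rotate (firstMinIdx (steps c π))

/-- the degree of a vertex in a (simple) edge set -/
def degIn (E : Finset (Sym2 ℕ)) (v : ℕ) : ℕ := (E.filter fun e => v ∈ e).card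

/-- degree of a vertex in a multigraph given by an edge multiset (loops count twice) -/
def mdeg (E : Multiset (Sym2 ℕ)) (v : ℕ) : ℕ :=
  (E.map fun e => (if v ∈ e then 1 else 0) + (if e = s(v, v) then 1 else 0)).sum

/-- connectivity of a (multi)graph on vertex set `V` with edges `E` -/
def ConnOn (V : Finset ℕ) (E : Set (Sym2 ℕ)) : Prop :=
  ∀ a ∈ V, ∀ b ∈ V, Relation.ReflTransGen (fun a b => s(a, b) ∈ E) a b

/-- the set of simple connected labeled graphs on `{1, …, m}` with degree sequence `d` -/
def GconSet (m : ℕ) (d : ℕ → ℕ) : Set (Finset (Sym2 ℕ)) :=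
  {E | (∀ e ∈ E, ¬ e.IsDiag) ∧ (∀ e ∈ E, ∀ v ∈ e, v ∈ Finset.Icc 1 m) ∧
       (∀ v ∈ Finset.Icc 1 m, degIn E v = d v) ∧ ConnOn (Finset.Icc 1 m) (E : Set (Sym2 ℕ))}

/-- ECD of the children sequence `(d̃₂ − 1, …, d̃_{m̃} − 1, 0, …, 0)` (with `2k` zeros) -/
def ecdFromDeg (m k : ℕ) (d : ℕ → ℕ) (i : ℕ) : ℕ :=
  ((Finset.Icc 2 m).filter fun j => d j = i + 1).card + if i = 0 then 2 * k else 0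

/-- `≪` order on admissible pairs -/
def pairLT (a b : List ℕ × List ℕ) : Prop :=
  PlaneTree.dfLT (PlaneTree.parent a.1) (PlaneTree.parent b.1) ∨
    (PlaneTree.parent a.1 = PlaneTree.parent b.1 ∧
      PlaneTree.dfLT (PlaneTree.parent a.2) (PlaneTree.parent b.2))

/-- labeled elements of `T_s^(k)` as in the sampling algorithm: a labeled plane tree whose
labels are `{2, …, m̃ + 2k}`, in which the vertex labeled `j ≤ m̃` has `d̃_j − 1` children and
the vertices labeled `> m̃` are leaves, together with a `≪`-increasing tuple of `k` admissible
pairs of leaves with distinct leaves, the `j`-th pair carrying labels `(m̃+2j−1, m̃+2j)`. -/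
def IsLabeledElement (m k : ℕ) (d : ℕ → ℕ) (t : LTree)
    (x : Fin k → List ℕ × List ℕ) : Prop :=
  (LTree.dfsLab t).Perm (List.range' 2 (m - 1 + 2 * k)) ∧
  (∀ p ∈ PlaneTree.pos (LTree.shape t),
    PlaneTree.numChild (LTree.shape t) p =
      (if 2 ≤ LTree.labelAt t p ∧ LTree.labelAt t p ≤ m then d (LTree.labelAt t p) - 1 else 0)) ∧
  (∀ j, PlaneTree.Admissible (LTree.shape t) (x j).1 (x j).2) ∧
  Function.Injective (PlaneTree.leafOf x) ∧
  (∀ j j' : Fin k, j < j' → pairLT (x j) (x j')) ∧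
  (∀ j : Fin k, LTree.labelAt t (x j).1 = m + 2 * (j : ℕ) + 1 ∧
      LTree.labelAt t (x j).2 = m + 2 * (j : ℕ) + 2)

/-- the edge multiset of the graph `I(t, x)`: tree edges, with the leaves of the admissible
pairs deleted and an edge joining the two parents of each admissible pair added -/
noncomputable def Iedges (t : LTree) {k : ℕ} (x : Fin k → List ℕ × List ℕ) :
    Multiset (Sym2 ℕ) :=
  (↑(((PlaneTree.pos (LTree.shape t)).filter fun p =>
        decide (p ≠ ([] : List ℕ) ∧ ∀ j, p ≠ (x j).1 ∧ p ≠ (x j).2)).map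
      fun p => s(LTree.labelAt t (PlaneTree.parent p), LTree.labelAt t p)) : Multiset (Sym2 ℕ))
  + ↑(List.ofFn fun j =>
      s(LTree.labelAt t (PlaneTree.parent (x j).1), LTree.labelAt t (PlaneTree.parent (x j).2)))

/- Brownian excursion: Gaussian/Bessel kernels and finite-dimensional densities -/
noncomputable def gaussD (s x : ℝ) : ℝ := Real.exp (-(x ^ 2) / (2 * s)) / Real.sqrt (2 * Real.pi * s)

noncomputable def killedK (s x y : ℝ) : ℝ := gaussD s (y - x) - gaussD s (y + x)

noncomputable def bes3K (s x y : ℝ) : ℝ := (y / x) * killedK s x y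

noncomputable def exStart (t x : ℝ) : ℝ :=
  Real.sqrt (2 / Real.pi) * x ^ 2 * t ^ (-(3 : ℝ) / 2) * Real.exp (-(x ^ 2) / (2 * t))

noncomputable def exEnd (s x : ℝ) : ℝ := (2 / s) * gaussD s x

/-- finite-dimensional density of the standard Brownian excursion at times `t 0 < … < t n` -/
noncomputable def exFdd {n : ℕ} (t : Fin (n + 1) → ℝ) (x : Fin (n + 1) → ℝ) : ℝ :=
  if ∀ i, 0 < x i then
    Real.sqrt (Real.pi / 2) * exStart (t 0) (x 0) *
      (∏ i : Fin n, bes3K (t i.succ - t i.castSucc) (x i.castSucc) (x i.succ)) *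
      exEnd (1 - t (Fin.last n)) (x (Fin.last n))
  else 0

/-- `e` is a standard Brownian excursion on `[0,1]`: continuous nonnegative paths vanishing at
the endpoints, positive inside, with the excursion finite-dimensional densities. -/
def IsStdBrownianExcursion {Ω : Type*} [MeasureSpace Ω] (e : Ω → ℝ → ℝ) : Prop :=
  (∀ ω, Continuous (e ω)) ∧ (∀ ω, e ω 0 = 0) ∧ (∀ ω, e ω 1 = 0) ∧
  (∀ ω, ∀ x ∈ Set.Ioo (0 : ℝ) 1, 0 < e ω x) ∧
  (∀ t : ℝ, Measurable fun ω => e ω t) ∧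
  ∀ (n : ℕ) (t : Fin (n + 1) → ℝ), StrictMono t → 0 < t 0 → t (Fin.last n) < 1 →
    Measure.map (fun ω i => e ω (t i)) (volume : Measure Ω)
      = volume.withDensity fun x => ENNReal.ofReal (exFdd t x)

/-- `j`-th smallest value (0-based) among `ω 0, …, ω (m−1)` -/
noncomputable def orderStat {m : ℕ} (ω : Fin m → ℝ) (j : ℕ) : ℝ :=
  ((Multiset.map ω Finset.univ.val).sort (· ≤ ·)).getD j 0

end Paper
namespace Paper.PlaneTree

lemma pos_node (ts : List PlaneTree) : pos (node ts) = [] :: posF 0 ts := by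
  rw [pos]

lemma posF_nil (n : ℕ) : posF n [] = [] := by rw [posF]

lemma posF_cons (n : ℕ) (t : PlaneTree) (ts : List PlaneTree) :
    posF n (t :: ts) = (pos t).map (fun q => n :: q) ++ posF (n + 1) ts := by
  rw [posF]

lemma numChild_nil (ts : List PlaneTree) : numChild (node ts) [] = ts.length := rfl

lemma numChild_cons (ts : List PlaneTree) (j : ℕ) (t : PlaneTree) (q : List ℕ)
    (h : ts[j]? = some t) : numChild (node ts) (j :: q) = numChild t q := by
  simp [numChild, subtreeAt, h]

lemma ecdF_cons (t : PlaneTree) (f : List PlaneTree) (i : ℕ) :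
    ecdF (t :: f) i = ecd t i + ecdF f i := by simp [ecdF]

lemma ecdF_append (f g : List PlaneTree) (i : ℕ) :
    ecdF (f ++ g) i = ecdF f i + ecdF g i := by simp [ecdF]

lemma filter_posF (i : ℕ) (us : List PlaneTree) :
    ∀ (ts : List PlaneTree) (n : ℕ), (∀ k, us[n + k]? = ts[k]?) →
    ((posF n ts).filter fun p => decide (numChild (node us) p = i)).length = ecdF ts i := by
  intro ts
  induction ts with
  | nil => intro n _; simp [posF_nil, ecdF]
  | cons t ts ih =>
    intro n h
    have ht : us[n]? = some t := by simpa using h 0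
    rw [posF_cons, List.filter_append, List.length_append, List.filter_map,
      List.length_map, ecdF_cons]
    congr 1
    · rw [ecd]
      congr 1
      apply List.filter_congr
      intro q _
      simp [Function.comp, numChild_cons us n t q ht]
    · exact ih (n + 1) (fun k => by
        have := h (k + 1); simp only [List.getElem?_cons_succ] at this
        rw [show n + 1 + k = n + (k + 1) by omega]; exact this)

lemma ecd_node (ts : List PlaneTree) (i : ℕ) :
    ecd (node ts) i = (if ts.length = i then 1 else 0) + ecdF ts i := by
  rw [ecd, pos_node, List.filter_cons]
  have h0 : numChild (node ts) [] = ts.length := numChild_nil ts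
  have hf := filter_posF i ts ts 0 (fun k => by simp)
  by_cases h : ts.length = i <;>
    simp [h0, h, hf, List.length_cons, Nat.add_comm]


/-- number of vertices -/
def cnt : PlaneTree → ℕ
  | node ts => 1 + (ts.attach.map fun x => cnt x.1).sum
decreasing_by
  have := List.sizeOf_lt_of_mem x.2
  simp [PlaneTree.node.sizeOf_spec] at *
  omega

lemma cnt_node (ts : List PlaneTree) : cnt (node ts) = 1 + (ts.map cnt).sum := by
  rw [cnt]
  simp

lemma one_le_cnt (t : PlaneTree) : 1 ≤ cnt t := by
  cases t with | node ts => rw [cnt_node]; omega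

lemma ecd_member_le (t : PlaneTree) (ts : List PlaneTree) (ht : t ∈ ts) (i : ℕ) :
    ecd t i ≤ ecdF ts i := by
  induction ts with
  | nil => simp at ht
  | cons u us ih =>
    rw [ecdF_cons]
    rcases List.mem_cons.1 ht with h | h
    · subst h; omega
    · have := ih h; omega

lemma ecd_deg_pos (t : PlaneTree) : 1 ≤ ecd t (deg t) := by
  cases t with | node ts => rw [ecd_node]; simp [deg]

/-- vertices = 1 + edges, and cnt = total of ecd -/
lemma cnt_sum_ecd : ∀ (t : PlaneTree) (N : ℕ), (∀ i, N ≤ i → ecd t i = 0) →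
    cnt t = ∑ i ∈ Finset.range N, ecd t i ∧
      ∑ i ∈ Finset.range N, ecd t i = 1 + ∑ i ∈ Finset.range N, i * ecd t i := by
  intro t
  induction t using PlaneTree.rec (motive_2 := fun ts => ∀ N,
      (∀ i, N ≤ i → ecdF ts i = 0) →
      (ts.map cnt).sum = ∑ i ∈ Finset.range N, ecdF ts i ∧
        ∑ i ∈ Finset.range N, ecdF ts i
          = ts.length + ∑ i ∈ Finset.range N, i * ecdF ts i) with
  | node ts ih =>
    intro N hN
    have hlen : ts.length < N := by
      by_contra h
      have := hN ts.length (by omega)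
      rw [ecd_node] at this
      simp at this
    have hF : ∀ i, N ≤ i → ecdF ts i = 0 := by
      intro i hi
      have := hN i hi
      rw [ecd_node] at this
      omega
    obtain ⟨h1, h2⟩ := ih N hF
    have hsum : ∑ i ∈ Finset.range N, ecd (node ts) i
        = 1 + ∑ i ∈ Finset.range N, ecdF ts i := by
      simp only [ecd_node]
      rw [Finset.sum_add_distrib, Finset.sum_ite_eq (Finset.range N) ts.length (fun _ => 1)]
      simp [Finset.mem_range.2 hlen]
    have hsum2 : ∑ i ∈ Finset.range N, i * ecd (node ts) i
        = ts.length + ∑ i ∈ Finset.range N, i * ecdF ts i := by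
      simp only [ecd_node]
      have key : ∀ i, i * ((if ts.length = i then 1 else 0) + ecdF ts i)
          = (if ts.length = i then ts.length else 0) + i * ecdF ts i := by
        intro i
        by_cases h : ts.length = i <;> simp [h] <;> ring_nf <;> omega
      rw [Finset.sum_congr rfl (fun i _ => key i), Finset.sum_add_distrib,
        Finset.sum_ite_eq (Finset.range N) ts.length (fun _ => ts.length)]
      simp [Finset.mem_range.2 hlen]
    constructor
    · rw [cnt_node, hsum, h1]
    · rw [hsum, hsum2]; omega
  | nil =>
    rename_i N hN
    constructor <;> simp [ecdF]
  | cons t ts iht ihts =>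
    rename_i N hN
    have hFt : ∀ i, N ≤ i → ecd t i = 0 := fun i hi => by
      have := hN i hi; rw [ecdF_cons] at this; omega
    have hFts : ∀ i, N ≤ i → ecdF ts i = 0 := fun i hi => by
      have := hN i hi; rw [ecdF_cons] at this; omega
    obtain ⟨h1, h2⟩ := iht N hFt
    obtain ⟨h3, h4⟩ := ihts N hFts
    simp only [ecdF_cons, List.map_cons, List.sum_cons, List.length_cons]
    constructor
    · rw [Finset.sum_add_distrib, h1, h3]
    · simp only [Nat.mul_add]
      rw [Finset.sum_add_distrib, Finset.sum_add_distrib]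
      omega


lemma ecdF_sum_eq (f : List PlaneTree) (N : ℕ) (h : ∀ i, N ≤ i → ecdF f i = 0) :
    ∑ i ∈ Finset.range N, ecdF f i = f.length + ∑ i ∈ Finset.range N, i * ecdF f i := by
  induction f with
  | nil => simp [ecdF]
  | cons t ts ih =>
    have hFt : ∀ i, N ≤ i → ecd t i = 0 := fun i hi => by
      have := h i hi; rw [ecdF_cons] at this; omega
    have hFts : ∀ i, N ≤ i → ecdF ts i = 0 := fun i hi => by
      have := h i hi; rw [ecdF_cons] at this; omega
    have h2 := (cnt_sum_ecd t N hFt).2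
    have h4 := ih hFts
    simp only [ecdF_cons, List.length_cons]
    rw [Finset.sum_add_distrib]
    simp only [Nat.mul_add]
    rw [Finset.sum_add_distrib]
    omega

/-- any forest in `forestSet s` has exactly `z` trees -/
lemma length_eq_of_forestSet {s : ℕ → ℕ} {M z m : ℕ}
    (hsupp : ∀ i, M ≤ i → s i = 0)
    (hm : m = ∑ i ∈ Finset.range M, s i)
    (hz : m = z + ∑ i ∈ Finset.range M, i * s i)
    {f : List PlaneTree} (hf : f ∈ forestSet s) : f.length = z := by
  have h0 : ∀ i, M ≤ i → ecdF f i = 0 := fun i hi => by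
    rw [hf i]; exact hsupp i hi
  have := ecdF_sum_eq f M h0
  simp only [hf _] at this
  omega

lemma finite_lists {α : Type*} (S : Set α) (hS : S.Finite) (n : ℕ) :
    {l : List α | (∀ t ∈ l, t ∈ S) ∧ l.length ≤ n}.Finite := by
  haveI := hS.to_subtype
  have h := List.finite_length_le (↥S) n
  apply Set.Finite.subset (h.image (List.map Subtype.val))
  rintro l ⟨hm, hl⟩
  refine ⟨l.attach.map fun x => (⟨x.1, hm x.1 x.2⟩ : ↥S), ?_, ?_⟩
  · simpa using hl
  · simp

lemma finite_cnt_le : ∀ n : ℕ, {t : PlaneTree | cnt t ≤ n}.Finite := by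
  intro n
  induction n with
  | zero =>
    convert Set.finite_empty
    ext t
    have := one_le_cnt t
    simp; omega
  | succ n ih =>
    apply Set.Finite.subset (((finite_lists _ ih n).image fun l => node l))
    intro t ht
    cases t with | node ts =>
    refine ⟨ts, ⟨?_, ?_⟩, rfl⟩
    · intro u hu
      have h1 : cnt u ≤ (ts.map cnt).sum := List.le_sum_of_mem (List.mem_map_of_mem (f := cnt) hu)
      have h2 : cnt (node ts) ≤ n + 1 := ht
      rw [cnt_node] at h2
      simp; omega
    · have h2 : cnt (node ts) ≤ n + 1 := ht
      rw [cnt_node] at h2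
      have : ts.length ≤ (ts.map cnt).sum := by
        have := List.length_le_sum_of_one_le (ts.map cnt) ?_
        · simpa using this
        · intro x hx
          obtain ⟨u, _, rfl⟩ := List.mem_map.1 hx
          exact one_le_cnt u
      omega

lemma forestSet_finite {s : ℕ → ℕ} {M z m : ℕ}
    (hsupp : ∀ i, M ≤ i → s i = 0)
    (hm : m = ∑ i ∈ Finset.range M, s i)
    (hz : m = z + ∑ i ∈ Finset.range M, i * s i) :
    (forestSet s).Finite := by
  apply Set.Finite.subset (finite_lists _ (finite_cnt_le m) z)
  intro f hf
  refine ⟨?_, le_of_eq (length_eq_of_forestSet hsupp hm hz hf)⟩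
  intro t ht
  have h0 : ∀ i, M ≤ i → ecd t i = 0 := fun i hi => by
    have h1 := ecd_member_le t f ht i
    rw [hf i, hsupp i hi] at h1
    omega
  have h1 := (cnt_sum_ecd t M h0).1
  have h2 : ∑ i ∈ Finset.range M, ecd t i ≤ ∑ i ∈ Finset.range M, s i :=
    Finset.sum_le_sum fun i _ => (hf i) ▸ ecd_member_le t f ht i
  simp only [Set.mem_setOf_eq]
  omega


def children : PlaneTree → List PlaneTree
  | node ts => ts

/-- delete the first root and splice in its children -/
def headSplice (f : List PlaneTree) : List PlaneTree :=
  children (f.headD (node [])) ++ f.tail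

lemma sub_hyps {s : ℕ → ℕ} {M z m : ℕ}
    (hsupp : ∀ j, M ≤ j → s j = 0)
    (hm : m = ∑ j ∈ Finset.range M, s j)
    (hz : m = z + ∑ j ∈ Finset.range M, j * s j)
    (hz1 : 1 ≤ z) {i : ℕ} (hi : 1 ≤ s i) :
    i < M ∧
    (∀ j, M ≤ j → s j - (if j = i then 1 else 0) = 0) ∧
    (m - 1 = ∑ j ∈ Finset.range M, (s j - (if j = i then 1 else 0))) ∧
    (m - 1 = (z - 1 + i) + ∑ j ∈ Finset.range M, j * (s j - (if j = i then 1 else 0))) := by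
  have hiM : i < M := by
    by_contra h
    have := hsupp i (by omega)
    omega
  have e1 : ∑ j ∈ Finset.range M, (s j - (if j = i then 1 else 0))
      + ∑ j ∈ Finset.range M, (if j = i then 1 else 0) = ∑ j ∈ Finset.range M, s j := by
    rw [← Finset.sum_add_distrib]
    apply Finset.sum_congr rfl
    intro j _
    by_cases h : j = i <;> simp [h] <;> omega
  have e1' : ∑ j ∈ Finset.range M, (if j = i then 1 else 0) = 1 := by
    rw [Finset.sum_ite_eq' (Finset.range M) i (fun _ => 1)]
    simp [Finset.mem_range.2 hiM]
  have e2 : ∑ j ∈ Finset.range M, j * (s j - (if j = i then 1 else 0))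
      + ∑ j ∈ Finset.range M, (if j = i then i else 0) = ∑ j ∈ Finset.range M, j * s j := by
    rw [← Finset.sum_add_distrib]
    apply Finset.sum_congr rfl
    intro j _
    by_cases h : j = i
    · subst h
      obtain ⟨k, hk⟩ := Nat.exists_eq_add_of_le hi
      simp [hk]
      ring
    · simp [h]
  have e2' : ∑ j ∈ Finset.range M, (if j = i then i else 0) = i := by
    rw [Finset.sum_ite_eq' (Finset.range M) i (fun _ => i)]
    simp [Finset.mem_range.2 hiM]
  have hm1 : 1 ≤ m := by
    have : s i ≤ ∑ j ∈ Finset.range M, s j :=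
      Finset.single_le_sum (fun j _ => Nat.zero_le _) (Finset.mem_range.2 hiM)
    omega
  have him : i ≤ ∑ j ∈ Finset.range M, j * s j := by
    have h1 : i * s i ≤ ∑ j ∈ Finset.range M, j * s j :=
      Finset.single_le_sum (f := fun j => j * s j) (fun j _ => Nat.zero_le _)
        (Finset.mem_range.2 hiM)
    have h2 : i ≤ i * s i := Nat.le_mul_of_pos_right i hi
    omega
  refine ⟨hiM, fun j hj => by simp [hsupp j hj], by omega, by omega⟩

lemma ecdF_node_cons (ts rest : List PlaneTree) (j : ℕ) :
    ecdF (node ts :: rest) j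
      = (if ts.length = j then 1 else 0) + ecdF (ts ++ rest) j := by
  rw [ecdF_cons, ecd_node, ecdF_append]
  omega

lemma rootDeg_cons_zero (t : PlaneTree) (rest : List PlaneTree) :
    rootDeg (t :: rest) 0 = deg t := rfl

lemma decomp_recon {f : List PlaneTree} {i : ℕ} (hne : f ≠ [])
    (hdeg : rootDeg f 0 = i) :
    f = node ((headSplice f).take i) :: (headSplice f).drop i := by
  obtain ⟨t, rest, rfl⟩ := List.exists_cons_of_ne_nil hne
  cases t with | node ts =>
  have hts : ts.length = i := hdeg
  have hs : headSplice (node ts :: rest) = ts ++ rest := rfl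
  rw [hs, ← hts, List.take_left, List.drop_left]

lemma decomp_bijOn {s : ℕ → ℕ} {M z m : ℕ}
    (hsupp : ∀ j, M ≤ j → s j = 0)
    (hm : m = ∑ j ∈ Finset.range M, s j)
    (hz : m = z + ∑ j ∈ Finset.range M, j * s j)
    (hz1 : 1 ≤ z) {i : ℕ} (hi : 1 ≤ s i) :
    Set.BijOn headSplice {f | f ∈ forestSet s ∧ rootDeg f 0 = i}
      (forestSet (fun j => s j - if j = i then 1 else 0)) := by
  obtain ⟨hiM, hsupp', hm', hz'⟩ := sub_hyps hsupp hm hz hz1 hi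
  have hlen : ∀ f ∈ forestSet s, f.length = z :=
    fun f hf => length_eq_of_forestSet hsupp hm hz hf
  have hne : ∀ f ∈ forestSet s, f ≠ [] := by
    intro f hf h
    have := hlen f hf
    rw [h] at this
    simp at this
    omega
  refine ⟨?_, ?_, ?_⟩
  · rintro f ⟨hf, hdeg⟩
    obtain ⟨t, rest, rfl⟩ := List.exists_cons_of_ne_nil (hne f hf)
    cases t with | node ts =>
    have hts : ts.length = i := hdeg
    intro j
    have h0 := ecdF_node_cons ts rest j
    rw [hf j, hts] at h0
    have hs : headSplice (node ts :: rest) = ts ++ rest := rfl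
    simp only [hs]
    by_cases h : i = j
    · subst h; simp at h0 ⊢; omega
    · rw [if_neg (fun hh => h hh.symm)]
      rw [if_neg h] at h0
      omega
  · rintro f ⟨hf, hdeg⟩ f' ⟨hf', hdeg'⟩ hee
    rw [decomp_recon (hne f hf) hdeg, decomp_recon (hne f' hf') hdeg', hee]
  · intro g hg
    have hglen : g.length = z - 1 + i :=
      length_eq_of_forestSet hsupp' hm' hz' hg
    have hig : i ≤ g.length := by omega
    have htk : (g.take i).length = i := by
      rw [List.length_take]; omega
    refine ⟨node (g.take i) :: g.drop i, ⟨?_, ?_⟩, ?_⟩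
    · intro j
      rw [ecdF_node_cons, htk, List.take_append_drop]
      have := hg j
      simp only at this
      by_cases h : i = j
      · subst h; simp at this ⊢; omega
      · rw [if_neg h]
        rw [if_neg (fun hh => h hh.symm)] at this
        omega
    · rw [rootDeg_cons_zero]; exact htk
    · show headSplice _ = g
      unfold headSplice
      simp [children, List.take_append_drop]


lemma root_mem {f : List PlaneTree} {j : ℕ} (h : j < f.length) :
    f.getD j (node []) ∈ f := by
  rw [List.getD_eq_getElem f (node []) h]
  exact List.getElem_mem h

lemma s_rootDeg_pos {s : ℕ → ℕ} {f : List PlaneTree} {j : ℕ}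
    (hf : f ∈ forestSet s) (hj : j < f.length) : 1 ≤ s (rootDeg f j) := by
  have hmem := root_mem (f := f) (j := j) hj
  have h1 := ecd_deg_pos (f.getD j (node []))
  have h2 := ecd_member_le _ f hmem (deg (f.getD j (node [])))
  rw [hf _] at h2
  have h3 : rootDeg f j = deg (f.getD j (node [])) := rfl
  rw [h3]
  omega

lemma forestSet_empty_of_z_zero {s : ℕ → ℕ} {M z m : ℕ}
    (hsupp : ∀ j, M ≤ j → s j = 0)
    (hm : m = ∑ j ∈ Finset.range M, s j)
    (hz : m = z + ∑ j ∈ Finset.range M, j * s j)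
    (hm1 : 1 ≤ m) (hz0 : z = 0) : forestSet s = ∅ := by
  ext f
  simp only [Set.mem_empty_iff_false, iff_false]
  intro hf
  have hlen := length_eq_of_forestSet hsupp hm hz hf
  rw [hz0] at hlen
  have hnil : f = [] := List.length_eq_zero_iff.1 hlen
  subst hnil
  have : ∀ j, s j = 0 := fun j => by
    have := hf j
    simp [ecdF] at this
    omega
  simp [this] at hm
  omega

lemma count_formula (m : ℕ) : ∀ (s : ℕ → ℕ) (M z : ℕ),
    (∀ i, M ≤ i → s i = 0) →
    (m = ∑ i ∈ Finset.range M, s i) →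
    (m = z + ∑ i ∈ Finset.range M, i * s i) → 1 ≤ z →
    (forestSet s).ncard * ∏ i ∈ Finset.range M, (s i).factorial
      = z * (m - 1).factorial := by
  induction m using Nat.strong_induction_on with
  | _ m ih =>
  intro s M z hsupp hm hz hz1
  have hzm : z ≤ m := by omega
  have hm1 : 1 ≤ m := by omega
  have hfin := forestSet_finite hsupp hm hz
  by_cases hm2 : m = 1
  -- base case m = 1
  · subst hm2
    have hz1' : z = 1 := by omega
    have hsum0 : ∑ i ∈ Finset.range M, i * s i = 0 := by omega
    have hvan : ∀ i, 1 ≤ i → s i = 0 := by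
      intro i hi
      by_cases hiM : i < M
      · have h1 : i * s i = 0 :=
          (Finset.sum_eq_zero_iff.1 hsum0) i (Finset.mem_range.2 hiM)
        rcases Nat.mul_eq_zero.1 h1 with h | h
        · omega
        · exact h
      · exact hsupp i (by omega)
    have hs0 : s 0 = 1 := by
      have hM : 0 < M := by
        rcases Nat.eq_zero_or_pos M with h | h
        · subst h; simp at hm
        · exact h
      have : ∑ i ∈ Finset.range M, s i = s 0 := by
        apply Finset.sum_eq_single_of_mem 0 (Finset.mem_range.2 hM)
        intro i _ hne
        exact hvan i (by omega)
      omega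
    have hsd : ∀ i, s i = if 0 = i then 1 else 0 := by
      intro i
      cases i with
      | zero => simpa using hs0
      | succ k => simp [hvan (k+1) (by omega)]
    have hset : forestSet s = {[node []]} := by
      ext f
      constructor
      · intro hf
        have hlen := length_eq_of_forestSet hsupp hm hz hf
        rw [hz1'] at hlen
        have hne : f ≠ [] := by intro h; rw [h] at hlen; simp at hlen
        obtain ⟨t, rest, rfl⟩ := List.exists_cons_of_ne_nil hne
        have hrest : rest = [] := by
          have := hlen; simp at this; exact this
        subst hrest
        have hpos := s_rootDeg_pos hf (j := 0) (by simp)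
        have hdeg : deg t = 0 := by
          by_contra h
          have := hvan (rootDeg [t] 0) ?_
          · omega
          · have : rootDeg [t] 0 = deg t := rfl
            omega
        cases t with | node ts =>
        have : ts = [] := List.length_eq_zero_iff.1 hdeg
        subst this
        rfl
      · intro hf
        rw [Set.mem_singleton_iff] at hf
        subst hf
        intro i
        rw [ecdF_cons, ecd_node]
        simp [ecdF, hsd i]
    rw [hset, hz1']
    have hfac : ∏ i ∈ Finset.range M, (s i).factorial = 1 :=
      Finset.prod_eq_one fun i _ => by rw [hsd i]; split <;> simp [Nat.factorial]
    rw [hfac]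
    simp [Set.ncard_singleton, Nat.factorial]
  -- inductive step m ≥ 2
  · have hm2' : 2 ≤ m := by omega
    set F := hfin.toFinset with hFdef
    have hmemF : ∀ f, f ∈ F ↔ f ∈ forestSet s := fun f => Set.Finite.mem_toFinset hfin
    have hFcard : (forestSet s).ncard = F.card := Set.ncard_eq_toFinset_card _ hfin
    have hfib : ∀ f ∈ F, rootDeg f 0 ∈ Finset.range M := by
      intro f hf
      have hf' := (hmemF f).1 hf
      have hlen := length_eq_of_forestSet hsupp hm hz hf'
      have hp := s_rootDeg_pos hf' (j := 0) (by omega)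
      refine Finset.mem_range.2 ?_
      by_contra h
      have := hsupp _ (show M ≤ rootDeg f 0 by omega)
      omega
    have hcardsum : F.card
        = ∑ i ∈ Finset.range M, (F.filter fun f => rootDeg f 0 = i).card :=
      Finset.card_eq_sum_card_fiberwise hfib
    have hfiber : ∀ i ∈ Finset.range M,
        (F.filter fun f => rootDeg f 0 = i).card
            * ∏ j ∈ Finset.range M, (s j).factorial
          = s i * ((z - 1 + i) * (m - 2).factorial) := by
      intro i hi
      by_cases hsi : 1 ≤ s i
      · obtain ⟨hiM, hsupp', hm', hzeq'⟩ := sub_hyps hsupp hm hz hz1 hsi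
        set s' := fun j => s j - if j = i then 1 else 0 with hs'
        have hbij := decomp_bijOn hsupp hm hz hz1 hsi
        have hA : ((F.filter fun f => rootDeg f 0 = i) : Set (List PlaneTree))
            = {f | f ∈ forestSet s ∧ rootDeg f 0 = i} := by
          ext f
          simp only [Finset.coe_filter, Set.mem_setOf_eq, hmemF]
        have hcardA : (F.filter fun f => rootDeg f 0 = i).card
            = {f | f ∈ forestSet s ∧ rootDeg f 0 = i}.ncard := by
          rw [← hA, Set.ncard_coe_finset]
        have himg : {f | f ∈ forestSet s ∧ rootDeg f 0 = i}.ncard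
            = (forestSet s').ncard := by
          rw [← hbij.image_eq, Set.ncard_image_of_injOn hbij.injOn]
        have herase : ∏ j ∈ (Finset.range M).erase i, (s j).factorial
            = ∏ j ∈ (Finset.range M).erase i, (s' j).factorial :=
          Finset.prod_congr rfl fun j hj => by
            have hne : j ≠ i := (Finset.mem_erase.1 hj).1
            simp [hs', hne]
        have hfaci : (s i).factorial = s i * (s' i).factorial := by
          obtain ⟨k, hk⟩ := Nat.exists_eq_add_of_le hsi
          have hsk : s' i = k := by simp [hs', hk]
          rw [hsk, hk, Nat.add_comm 1 k, Nat.factorial_succ, Nat.add_comm k 1]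
        have hprod : ∏ j ∈ Finset.range M, (s j).factorial
            = s i * ∏ j ∈ Finset.range M, (s' j).factorial := by
          rw [← Finset.mul_prod_erase (Finset.range M)
                (fun j => (s j).factorial) hi,
              ← Finset.mul_prod_erase (Finset.range M)
                (fun j => (s' j).factorial) hi,
              herase, hfaci]
          ring
        have hmain : (forestSet s').ncard * ∏ j ∈ Finset.range M, (s' j).factorial
            = (z - 1 + i) * (m - 2).factorial := by
          by_cases hzp : 1 ≤ z - 1 + i
          · have hml : m - 1 < m := by omega
            have := ih (m - 1) hml s' M (z - 1 + i) hsupp' hm' hzeq' hzp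
            have he : m - 1 - 1 = m - 2 := by omega
            rw [he] at this
            exact this
          · have h0 : z - 1 + i = 0 := by omega
            rw [forestSet_empty_of_z_zero hsupp' hm' hzeq' (by omega) h0]
            simp [h0]
        calc (F.filter fun f => rootDeg f 0 = i).card
              * ∏ j ∈ Finset.range M, (s j).factorial
            = (forestSet s').ncard
              * (s i * ∏ j ∈ Finset.range M, (s' j).factorial) := by
              rw [hcardA, himg, hprod]
          _ = s i * ((forestSet s').ncard
              * ∏ j ∈ Finset.range M, (s' j).factorial) := by ring
          _ = s i * ((z - 1 + i) * (m - 2).factorial) := by rw [hmain]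
      · have hempty : F.filter (fun f => rootDeg f 0 = i) = ∅ := by
          rw [Finset.filter_eq_empty_iff]
          intro f hf hdeg
          have hf' := (hmemF f).1 hf
          have hlen := length_eq_of_forestSet hsupp hm hz hf'
          have hp := s_rootDeg_pos hf' (j := 0) (by omega)
          rw [hdeg] at hp
          omega
        rw [hempty]
        simp
        omega
    have hsum2 : ∑ i ∈ Finset.range M,
          (s i * ((z - 1 + i) * (m - 2).factorial))
        = (∑ i ∈ Finset.range M, (s i * (z - 1) + i * s i))
            * (m - 2).factorial := by
      rw [Finset.sum_mul]
      exact Finset.sum_congr rfl fun i _ => by ring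
    have hsum3 : ∑ i ∈ Finset.range M, (s i * (z - 1) + i * s i)
        = m * (z - 1) + (m - z) := by
      rw [Finset.sum_add_distrib, ← Finset.sum_mul, ← hm]
      omega
    have hzm1 : m * (z - 1) + (m - z) = z * (m - 1) := by
      obtain ⟨w, rfl⟩ : ∃ w, z = w + 1 := ⟨z - 1, by omega⟩
      obtain ⟨u, rfl⟩ : ∃ u, m = (w + 1) + u := ⟨m - (w + 1), by omega⟩
      simp [Nat.add_sub_cancel_left]
      ring
    have hfac2 : (m - 1).factorial = (m - 1) * (m - 2).factorial := by
      have he : m - 1 = (m - 2) + 1 := by omega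
      rw [he, Nat.factorial_succ]
    rw [hFcard, hcardsum, Finset.sum_mul,
      Finset.sum_congr rfl hfiber, hsum2, hsum3, hzm1, hfac2]
    ring


lemma ecdF_ofFn {n : ℕ} (h : Fin n → PlaneTree) (i : ℕ) :
    ecdF (List.ofFn h) i = ∑ k, ecd (h k) i := by
  rw [ecdF, List.map_ofFn, List.sum_ofFn]
  rfl

lemma getD_eq_get (f : List PlaneTree) (k : Fin f.length) :
    f.getD (k : ℕ) (node []) = f.get k := by
  rw [List.getD_eq_getElem f (node []) k.isLt]
  rfl

lemma ecdF_eq_sum (f : List PlaneTree) (i : ℕ) :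
    ecdF f i = ∑ k : Fin f.length, ecd (f.get k) i := by
  conv_lhs => rw [← List.ofFn_get f]
  rw [ecdF_ofFn]

/-- permuting the trees of a forest -/
def permF (z : ℕ) (σ : Equiv.Perm (Fin z)) (f : List PlaneTree) : List PlaneTree :=
  List.ofFn fun k => f.getD (σ k : ℕ) (node [])

lemma length_permF (z : ℕ) (σ : Equiv.Perm (Fin z)) (f : List PlaneTree) :
    (permF z σ f).length = z := by simp [permF]

lemma ecdF_permF {z : ℕ} (σ : Equiv.Perm (Fin z)) {f : List PlaneTree}
    (hf : f.length = z) (i : ℕ) : ecdF (permF z σ f) i = ecdF f i := by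
  subst hf
  rw [permF, ecdF_ofFn, ecdF_eq_sum]
  rw [Finset.sum_congr rfl fun k _ => by rw [getD_eq_get f (σ k)]]
  exact Equiv.sum_comp σ fun j => ecd (f.get j) i

lemma rootDeg_permF {z : ℕ} (σ : Equiv.Perm (Fin z)) (f : List PlaneTree)
    (k : Fin z) : rootDeg (permF z σ f) (k : ℕ) = rootDeg f (σ k : ℕ) := by
  have h : (permF z σ f).getD (k : ℕ) (node []) = f.getD (σ k : ℕ) (node []) := by
    rw [List.getD_eq_getElem _ (node []) (by simp [permF] : (k : ℕ) < (permF z σ f).length)]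
    simp [permF]
  rw [rootDeg, rootDeg, h]

lemma getD_permF {z : ℕ} (σ : Equiv.Perm (Fin z)) (f : List PlaneTree) (k : Fin z) :
    (permF z σ f).getD (k : ℕ) (node []) = f.getD (σ k : ℕ) (node []) := by
  rw [List.getD_eq_getElem _ (node []) (by simp [permF] : (k : ℕ) < (permF z σ f).length)]
  simp [permF]

lemma permF_permF {z : ℕ} (σ : Equiv.Perm (Fin z)) {f : List PlaneTree}
    (hf : f.length = z) : permF z σ⁻¹ (permF z σ f) = f := by
  subst hf
  apply List.ext_getElem (by simp [permF])
  intro n h1 h2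
  have hn : n < f.length := h2
  calc (permF f.length σ⁻¹ (permF f.length σ f))[n]
      = (permF f.length σ⁻¹ (permF f.length σ f)).getD
          (((⟨n, hn⟩ : Fin f.length)) : ℕ) (node []) :=
        (List.getD_eq_getElem _ _ (by simpa [permF] using hn)).symm
    _ = (permF f.length σ f).getD ((σ⁻¹ ⟨n, hn⟩ : Fin f.length) : ℕ) (node []) :=
        getD_permF σ⁻¹ _ _
    _ = f.getD ((σ (σ⁻¹ ⟨n, hn⟩) : Fin f.length) : ℕ) (node []) := getD_permF σ f _
    _ = f[n] := by
        rw [show σ (σ⁻¹ ⟨n, hn⟩) = ⟨n, hn⟩ from σ.apply_symm_apply _]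
        exact List.getD_eq_getElem f (node []) hn

lemma permF_bijOn {s : ℕ → ℕ} {M z m : ℕ}
    (hsupp : ∀ j, M ≤ j → s j = 0)
    (hm : m = ∑ j ∈ Finset.range M, s j)
    (hz : m = z + ∑ j ∈ Finset.range M, j * s j)
    (σ : Equiv.Perm (Fin z)) :
    Set.BijOn (permF z σ) (forestSet s) (forestSet s) := by
  have hlen : ∀ f ∈ forestSet s, f.length = z :=
    fun f hf => length_eq_of_forestSet hsupp hm hz hf
  have hmaps : ∀ (τ : Equiv.Perm (Fin z)),
      Set.MapsTo (permF z τ) (forestSet s) (forestSet s) :=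
    fun τ f hf => fun i => by rw [ecdF_permF τ (hlen f hf) i, hf i]
  refine ⟨hmaps σ, ?_, ?_⟩
  · intro f hf f' hf' he
    have := congrArg (permF z σ⁻¹) he
    rwa [permF_permF σ (hlen f hf), permF_permF σ (hlen f' hf')] at this
  · intro g hg
    refine ⟨permF z σ⁻¹ g, hmaps σ⁻¹ hg, ?_⟩
    have h2 := permF_permF (σ := σ⁻¹) (f := g) (hlen g hg)
    rwa [inv_inv] at h2

lemma bijOn_filter {α β : Type*} {Φ : α → β} {A : Set α} {B : Set β}
    (h : Set.BijOn Φ A B) (P : α → Prop) (Q : β → Prop)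
    (hPQ : ∀ a ∈ A, (Q (Φ a) ↔ P a)) :
    Set.BijOn Φ {a | a ∈ A ∧ P a} {b | b ∈ B ∧ Q b} := by
  refine ⟨?_, ?_, ?_⟩
  · rintro a ⟨ha, hp⟩
    exact ⟨h.mapsTo ha, (hPQ a ha).2 hp⟩
  · exact h.injOn.mono fun a ha => ha.1
  · rintro b ⟨hb, hq⟩
    obtain ⟨a, ha, rfl⟩ := h.surjOn hb
    exact ⟨a, ⟨ha, (hPQ a ha).1 hq⟩, rfl⟩


lemma exists_perm_two {α : Type*} [DecidableEq α] {a b c d : α}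
    (hab : a ≠ b) (hcd : c ≠ d) : ∃ σ : Equiv.Perm α, σ c = a ∧ σ d = b := by
  refine ⟨(Equiv.swap d ((Equiv.swap a c) b)).trans (Equiv.swap a c), ?_, ?_⟩
  · have h2 : c ≠ (Equiv.swap a c) b := by
      intro h
      have := congrArg (Equiv.swap a c) h
      rw [Equiv.swap_apply_self, Equiv.swap_apply_right] at this
      exact hab this
    rw [Equiv.trans_apply, Equiv.swap_apply_of_ne_of_ne hcd h2,
      Equiv.swap_apply_right]
  · rw [Equiv.trans_apply, Equiv.swap_apply_left, Equiv.swap_apply_self]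

lemma ncard_bijOn {α β : Type*} {Φ : α → β} {A : Set α} {B : Set β}
    (h : Set.BijOn Φ A B) : A.ncard = B.ncard := by
  rw [← h.image_eq, Set.ncard_image_of_injOn h.injOn]

lemma pair_ncard {s : ℕ → ℕ} {M z m : ℕ}
    (hsupp : ∀ j, M ≤ j → s j = 0)
    (hm : m = ∑ j ∈ Finset.range M, s j)
    (hz : m = z + ∑ j ∈ Finset.range M, j * s j)
    {j₁ j₂ : ℕ} (h1 : j₁ < z) (h2 : j₂ < z) (hjj : j₁ ≠ j₂) (hz2 : 2 ≤ z)
    (i₁ i₂ : ℕ) :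
    {f | f ∈ forestSet s ∧ rootDeg f j₁ = i₁ ∧ rootDeg f j₂ = i₂}.ncard
      = {f | f ∈ forestSet s ∧ rootDeg f 0 = i₁ ∧ rootDeg f 1 = i₂}.ncard := by
  obtain ⟨σ, hc, hd⟩ := exists_perm_two (a := (⟨j₁, h1⟩ : Fin z)) (b := ⟨j₂, h2⟩)
    (c := ⟨0, by omega⟩) (d := ⟨1, by omega⟩)
    (by simp [Fin.ext_iff]; omega) (by simp [Fin.ext_iff])
  have hbij := bijOn_filter (permF_bijOn hsupp hm hz σ)
    (fun f => rootDeg f j₁ = i₁ ∧ rootDeg f j₂ = i₂)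
    (fun g => rootDeg g 0 = i₁ ∧ rootDeg g 1 = i₂) ?_
  · exact ncard_bijOn hbij
  · intro f _
    have e0 : rootDeg (permF z σ f) 0 = rootDeg f j₁ := by
      have := rootDeg_permF σ f ⟨0, by omega⟩
      rwa [hc] at this
    have e1 : rootDeg (permF z σ f) 1 = rootDeg f j₂ := by
      have := rootDeg_permF σ f ⟨1, by omega⟩
      rwa [hd] at this
    simp only [e0, e1]

lemma single_ncard {s : ℕ → ℕ} {M z m : ℕ}
    (hsupp : ∀ j, M ≤ j → s j = 0)
    (hm : m = ∑ j ∈ Finset.range M, s j)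
    (hz : m = z + ∑ j ∈ Finset.range M, j * s j)
    {j : ℕ} (h1 : j < z) (i : ℕ) :
    {f | f ∈ forestSet s ∧ rootDeg f j = i}.ncard
      = {f | f ∈ forestSet s ∧ rootDeg f 0 = i}.ncard := by
  have hz1 : 0 < z := by omega
  set σ : Equiv.Perm (Fin z) := Equiv.swap ⟨0, hz1⟩ ⟨j, h1⟩ with hσ
  have hbij := bijOn_filter (permF_bijOn hsupp hm hz σ)
    (fun f => rootDeg f j = i) (fun g => rootDeg g 0 = i) ?_
  · exact ncard_bijOn hbij
  · intro f _
    have e0 : rootDeg (permF z σ f) 0 = rootDeg f j := by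
      have := rootDeg_permF σ f ⟨0, hz1⟩
      rwa [hσ, Equiv.swap_apply_left] at this
    simp only [e0]

lemma rootDeg_headSplice {f : List PlaneTree} {i : ℕ} (hne : f ≠ [])
    (hdeg : rootDeg f 0 = i) : rootDeg (headSplice f) i = rootDeg f 1 := by
  obtain ⟨t, rest, rfl⟩ := List.exists_cons_of_ne_nil hne
  cases t with | node ts =>
  have hts : ts.length = i := hdeg
  have hhs : headSplice (node ts :: rest) = ts ++ rest := rfl
  rw [hhs, rootDeg, rootDeg, List.getD_cons_succ, ← hts,
    List.getD_append_right _ _ _ _ (le_refl ts.length)]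
  simp

lemma prod_factorial_split {s : ℕ → ℕ} {M i : ℕ} (hiM : i < M) (hsi : 1 ≤ s i) :
    ∏ j ∈ Finset.range M, (s j).factorial
      = s i * ∏ j ∈ Finset.range M, (s j - if j = i then 1 else 0).factorial := by
  have hi : i ∈ Finset.range M := Finset.mem_range.2 hiM
  set s' := fun j => s j - if j = i then 1 else 0 with hs'
  have herase : ∏ j ∈ (Finset.range M).erase i, (s j).factorial
      = ∏ j ∈ (Finset.range M).erase i, (s' j).factorial :=
    Finset.prod_congr rfl fun j hj => by
      have hne : j ≠ i := (Finset.mem_erase.1 hj).1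
      simp [hs', hne]
  have hfaci : (s i).factorial = s i * (s' i).factorial := by
    obtain ⟨k, hk⟩ := Nat.exists_eq_add_of_le hsi
    have hsk : s' i = k := by simp [hs', hk]
    rw [hsk, hk, Nat.add_comm 1 k, Nat.factorial_succ, Nat.add_comm k 1]
  rw [← Finset.mul_prod_erase (Finset.range M) (fun j => (s j).factorial) hi,
      ← Finset.mul_prod_erase (Finset.range M) (fun j => (s' j).factorial) hi,
      herase, hfaci]
  ring

end Paper.PlaneTree

open Paper Paper.PlaneTree in
/-- joint law of the children counts of two roots of a uniform forest. -/
theorem forest_two_roots_joint (s : ℕ → ℕ) (M z m : ℕ)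
    (hsupp : ∀ i, M ≤ i → s i = 0)
    (hm : m = ∑ i ∈ Finset.range M, s i)
    (hz : m = z + ∑ i ∈ Finset.range M, i * s i)
    (hz2 : 2 ≤ z) (hm3 : 3 ≤ m)
    (j₁ j₂ : ℕ) (hj₁ : j₁ < z) (hj₂ : j₂ < z) (hjj : j₁ ≠ j₂)
    (i₁ i₂ : ℕ) (hii : i₁ ≠ i₂) :
    {f ∈ forestSet s | rootDeg f j₁ = i₁ ∧ rootDeg f j₂ = i₂}.ncard
        * (z * (m - 1) * (m - 2))
      = (z - 2 + i₁ + i₂) * s i₁ * s i₂ * (forestSet s).ncard := by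
  classical
  -- degenerate cases: some s value vanishes
  have hflen : ∀ f ∈ forestSet s, f.length = z :=
    fun f hf => length_eq_of_forestSet hsupp hm hz hf
  by_cases hs1 : 1 ≤ s i₁
  case neg =>
    have hempty : {f | f ∈ forestSet s ∧ rootDeg f j₁ = i₁ ∧ rootDeg f j₂ = i₂} = ∅ := by
      ext f
      simp only [Set.mem_setOf_eq, Set.mem_empty_iff_false, iff_false]
      rintro ⟨hf, hd1, _⟩
      have := s_rootDeg_pos hf (j := j₁) (by rw [hflen f hf]; omega)
      rw [hd1] at this
      omega
    have hsz : s i₁ = 0 := by omega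
    rw [hempty, hsz]
    simp
  case pos =>
  by_cases hs2 : 1 ≤ s i₂
  case neg =>
    have hempty : {f | f ∈ forestSet s ∧ rootDeg f j₁ = i₁ ∧ rootDeg f j₂ = i₂} = ∅ := by
      ext f
      simp only [Set.mem_setOf_eq, Set.mem_empty_iff_false, iff_false]
      rintro ⟨hf, _, hd2⟩
      have := s_rootDeg_pos hf (j := j₂) (by rw [hflen f hf]; omega)
      rw [hd2] at this
      omega
    have hsz : s i₂ = 0 := by omega
    rw [hempty, hsz]
    simp
  case pos =>
  -- main case
  obtain ⟨hiM1, hsupp', hm', hzeq'⟩ := sub_hyps hsupp hm hz (by omega) hs1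
  set s' : ℕ → ℕ := fun j => s j - if j = i₁ then 1 else 0 with hs'def
  have hne21 : i₂ ≠ i₁ := fun h => hii h.symm
  have hs2' : 1 ≤ s' i₂ := by
    have : s' i₂ = s i₂ := by simp [hs'def, hne21]
    omega
  have hz1' : 1 ≤ z - 1 + i₁ := by omega
  obtain ⟨hiM2, hsupp'', hm'', hzeq''⟩ := sub_hyps hsupp' hm' hzeq' hz1' hs2'
  set s'' : ℕ → ℕ := fun j => s' j - if j = i₂ then 1 else 0 with hs''def
  -- step 1: move the marked roots to positions 0 and 1
  have step1 : {f | f ∈ forestSet s ∧ rootDeg f j₁ = i₁ ∧ rootDeg f j₂ = i₂}.ncard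
      = {f | f ∈ forestSet s ∧ rootDeg f 0 = i₁ ∧ rootDeg f 1 = i₂}.ncard :=
    pair_ncard hsupp hm hz hj₁ hj₂ hjj hz2 i₁ i₂
  -- step 2: remove the first root
  have hd1 := decomp_bijOn hsupp hm hz (by omega) hs1
  have hpq : ∀ f ∈ {f | f ∈ forestSet s ∧ rootDeg f 0 = i₁},
      ((fun g => rootDeg g i₁ = i₂) (headSplice f) ↔ (fun f => rootDeg f 1 = i₂) f) := by
    rintro f ⟨hf, hdeg⟩
    have hne : f ≠ [] := by
      intro h
      have := hflen f hf
      rw [h] at this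
      simp at this
      omega
    simp only [rootDeg_headSplice hne hdeg]
  have hbij2 := bijOn_filter hd1 (fun f => rootDeg f 1 = i₂)
    (fun g => rootDeg g i₁ = i₂) hpq
  have step2 : {f | f ∈ forestSet s ∧ rootDeg f 0 = i₁ ∧ rootDeg f 1 = i₂}.ncard
      = {g | g ∈ forestSet s' ∧ rootDeg g i₁ = i₂}.ncard := by
    have := ncard_bijOn hbij2
    rw [← this]
    congr 1
    ext f
    simp only [Set.mem_setOf_eq]
    tauto
  -- step 3: move root i₁ to position 0 in the reduced forest
  have step3 : {g | g ∈ forestSet s' ∧ rootDeg g i₁ = i₂}.ncard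
      = {g | g ∈ forestSet s' ∧ rootDeg g 0 = i₂}.ncard :=
    single_ncard hsupp' hm' hzeq' (by omega) i₂
  -- step 4: remove the second root
  have hd2 := decomp_bijOn hsupp' hm' hzeq' hz1' hs2'
  have step4 : {g | g ∈ forestSet s' ∧ rootDeg g 0 = i₂}.ncard
      = (forestSet s'').ncard := ncard_bijOn hd2
  -- counting formulas
  have hc0 := count_formula m s M z hsupp hm hz (by omega)
  have hz'' : 1 ≤ z - 1 + i₁ - 1 + i₂ := by omega
  have hc2 := count_formula (m - 1 - 1) s'' M (z - 1 + i₁ - 1 + i₂)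
    hsupp'' hm'' hzeq'' hz''
  have hp1 : ∏ j ∈ Finset.range M, (s j).factorial
      = s i₁ * ∏ j ∈ Finset.range M, (s' j).factorial :=
    prod_factorial_split hiM1 hs1
  have hp2 : ∏ j ∈ Finset.range M, (s' j).factorial
      = s' i₂ * ∏ j ∈ Finset.range M, (s'' j).factorial :=
    prod_factorial_split hiM2 hs2'
  have hsi2 : s' i₂ = s i₂ := by simp [hs'def, hne21]
  -- numeric simplifications
  have hzW : z - 1 + i₁ - 1 + i₂ = z - 2 + i₁ + i₂ := by omega
  have hm12 : m - 1 - 1 - 1 = m - 3 := by omega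
  rw [hzW, hm12] at hc2
  have hfa : (m - 1).factorial = (m - 1) * ((m - 2) * (m - 3).factorial) := by
    have e1 : m - 1 = (m - 2) + 1 := by omega
    have e2 : m - 2 = (m - 3) + 1 := by omega
    rw [e1, Nat.factorial_succ, ← e1, e2, Nat.factorial_succ, ← e2]
  -- assemble
  rw [step1, step2, step3, step4]
  set C := (forestSet s'').ncard with hC
  set B := (forestSet s).ncard with hB
  set P2 := ∏ j ∈ Finset.range M, (s'' j).factorial with hP2
  have hP2pos : 0 < P2 := Finset.prod_pos fun j _ => Nat.factorial_pos _
  apply Nat.eq_of_mul_eq_mul_right hP2pos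
  calc C * (z * (m - 1) * (m - 2)) * P2
      = (C * P2) * (z * (m - 1) * (m - 2)) := by ring
    _ = ((z - 2 + i₁ + i₂) * (m - 3).factorial) * (z * (m - 1) * (m - 2)) := by
        rw [hc2]
    _ = z * (z - 2 + i₁ + i₂) * ((m - 1) * ((m - 2) * (m - 3).factorial)) := by
        ring
    _ = (z - 2 + i₁ + i₂) * (z * (m - 1).factorial) := by rw [← hfa]; ring
    _ = (z - 2 + i₁ + i₂) * (B * ∏ j ∈ Finset.range M, (s j).factorial) := by
        rw [hc0]
    _ = (z - 2 + i₁ + i₂) * (B * (s i₁ * (s i₂ * P2))) := by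
        rw [hp1, hp2, hsi2]
    _ = (z - 2 + i₁ + i₂) * s i₁ * s i₂ * B * P2 := by ring
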